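/- Let W be the Coxeter group of an E-GCM graph acting on V via the quasi-standard geometric representation, and let N_M(w) = {α ∈ Φ_M+ : w·α ∈ Φ_M−}. For w ∈ W and a generator s_i: if w·α_i is a positive root then N_M(ws_i) = s_i(N_M(w)) ⊔ (ℝα_i ∩ Φ_M+), a disjoint union; if w·α_i is a negative root then N_M(ws_i) = s_i(N_M(w) \ ℝα_i). -/
import Mathlib


open Real

/-- The quasi-standard reflection `s_i` as a linear endomorphism of `V = ℝⁿ` with basis of
simple roots `α_j = Pi.single j 1`: `s_i(v) = v − 2B(α_i,v)α_i` where `B(α_i,α_j) = M_ij/2`. -/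
noncomputable def reflLin {n : ℕ} (M : Matrix (Fin n) (Fin n) ℝ) (i : Fin n) :
    Module.End ℝ (Fin n → ℝ) where
  toFun v := v - (∑ j, M i j * v j) • (Pi.single i 1 : Fin n → ℝ)
  map_add' v w := by
    ext t
    simp only [Pi.add_apply, Pi.sub_apply, Pi.smul_apply, smul_eq_mul, mul_add,
      Finset.sum_add_distrib]
    ring
  map_smul' c v := by
    ext t
    simp only [Pi.smul_apply, Pi.sub_apply, smul_eq_mul, RingHom.id_apply]
    rw [show (∑ j, M i j * (c * v j)) = c * ∑ j, M i j * v j from by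
      rw [Finset.mul_sum]; exact Finset.sum_congr rfl fun j _ => by ring]
    ring

/-- `M` is an E-generalized Cartan matrix whose amplitude products correspond to the
Coxeter matrix `K` (where `K i j = 0` encodes `m_ij = ∞`). -/
def IsEGCM {n : ℕ} (M : Matrix (Fin n) (Fin n) ℝ) (K : CoxeterMatrix (Fin n)) : Prop :=
  (∀ i, M i i = 2) ∧ (∀ i j, i ≠ j → M i j ≤ 0) ∧ (∀ i j, M i j = 0 ↔ M j i = 0) ∧
  (∀ i j, i ≠ j →
    (K i j = 0 ∧ 4 ≤ M i j * M j i) ∨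
    (2 ≤ K i j ∧ M i j * M j i = 4 * Real.cos (π / (K i j : ℝ)) ^ 2))

/-- The root system `Φ_M = {w·α_i}` of the quasi-standard geometric representation,
where the representation is given by `ρ`. -/
def Phi {n : ℕ} {W : Type*} [Group W] (ρ : W →* Module.End ℝ (Fin n → ℝ)) :
    Set (Fin n → ℝ) :=
  {v | ∃ (w : W) (i : Fin n), v = ρ w (Pi.single i 1)}

/-- The positive roots: roots that are nonnegative combinations of the simple roots. -/
def PhiPlus {n : ℕ} {W : Type*} [Group W] (ρ : W →* Module.End ℝ (Fin n → ℝ)) :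
    Set (Fin n → ℝ) :=
  {v | v ∈ Phi ρ ∧ ∀ j, 0 ≤ v j}

/-- The negative roots: roots that are nonpositive combinations of the simple roots. -/
def PhiMinus {n : ℕ} {W : Type*} [Group W] (ρ : W →* Module.End ℝ (Fin n → ℝ)) :
    Set (Fin n → ℝ) :=
  {v | v ∈ Phi ρ ∧ ∀ j, v j ≤ 0}

/-- The set of real scalar multiples of the simple root `α_i`. -/
def multA {n : ℕ} (i : Fin n) : Set (Fin n → ℝ) :=
  {v | ∃ c : ℝ, v = c • (Pi.single i 1 : Fin n → ℝ)}

/-- `N_M(w)`: the set of positive roots sent by `w` to negative roots. -/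
def NM {n : ℕ} {W : Type*} [Group W] (ρ : W →* Module.End ℝ (Fin n → ℝ)) (w : W) :
    Set (Fin n → ℝ) :=
  {v | v ∈ PhiPlus ρ ∧ ρ w v ∈ PhiMinus ρ}

section Aux

variable {n : ℕ}

lemma sum_mul_single (f : Fin n → ℝ) (i : Fin n) :
    ∑ j, f j * (Pi.single i 1 : Fin n → ℝ) j = f i := by
  rw [Finset.sum_eq_single i]
  · simp
  · intro b _ hb
    simp [Pi.single_eq_of_ne hb]
  · simp

lemma reflLin_apply (M : Matrix (Fin n) (Fin n) ℝ) (i : Fin n) (v : Fin n → ℝ) :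
    reflLin M i v = v - (∑ j, M i j * v j) • (Pi.single i 1 : Fin n → ℝ) := rfl

lemma reflLin_apply_ne (M : Matrix (Fin n) (Fin n) ℝ) (i : Fin n) (v : Fin n → ℝ)
    {j : Fin n} (h : j ≠ i) : reflLin M i v j = v j := by
  rw [reflLin_apply]
  simp [Pi.single_eq_of_ne h]

lemma reflLin_single_self (M : Matrix (Fin n) (Fin n) ℝ) (i : Fin n) (h2 : M i i = 2) :
    reflLin M i (Pi.single i 1) = -(Pi.single i 1 : Fin n → ℝ) := by
  rw [reflLin_apply, sum_mul_single (fun j => M i j) i, h2]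
  ext j
  simp only [Pi.single_apply, Pi.sub_apply, Pi.smul_apply, Pi.neg_apply, smul_eq_mul]
  split_ifs <;> ring

lemma reflLin_pair (M : Matrix (Fin n) (Fin n) ℝ) (p i t : Fin n) (x y : ℝ) :
    reflLin M p (x • (Pi.single i 1 : Fin n → ℝ) + y • (Pi.single t 1 : Fin n → ℝ)) =
      x • (Pi.single i 1 : Fin n → ℝ) + y • (Pi.single t 1 : Fin n → ℝ) -
        (x * M p i + y * M p t) • (Pi.single p 1 : Fin n → ℝ) := by
  rw [reflLin_apply]
  congr 1
  have : ∀ j, M p j * (x • (Pi.single i 1 : Fin n → ℝ) + y • (Pi.single t 1 : Fin n → ℝ)) j =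
      x * (M p j * (Pi.single i 1 : Fin n → ℝ) j) + y * (M p j * (Pi.single t 1 : Fin n → ℝ) j) := by
    intro j; simp only [Pi.add_apply, Pi.smul_apply, Pi.single_apply, smul_eq_mul]
    split_ifs <;> ring
  rw [Finset.sum_congr rfl (fun j _ => this j), Finset.sum_add_distrib, ← Finset.mul_sum,
    ← Finset.mul_sum, sum_mul_single (fun j => M p j) i, sum_mul_single (fun j => M p j) t]

end Aux
/-- Coefficient sequence for alternating products of two quasi-standard reflections
applied to a simple root. -/
noncomputable def dSeq (a b : ℝ) : ℕ → ℝ × ℝ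
  | 0 => (1, 0)
  | k + 1 =>
    if Even k then ((dSeq a b k).1, b * (dSeq a b k).1 - (dSeq a b k).2)
    else (a * (dSeq a b k).2 - (dSeq a b k).1, (dSeq a b k).2)

lemma dSeq_even_succ (a b : ℝ) (k : ℕ) (h : Even k) :
    dSeq a b (k + 1) = ((dSeq a b k).1, b * (dSeq a b k).1 - (dSeq a b k).2) := by
  rw [dSeq, if_pos h]

lemma dSeq_odd_succ (a b : ℝ) (k : ℕ) (h : ¬ Even k) :
    dSeq a b (k + 1) = (a * (dSeq a b k).2 - (dSeq a b k).1, (dSeq a b k).2) := by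
  rw [dSeq, if_neg h]

/-- Trigonometric closed form for `dSeq` in the finite-order case. -/
lemma dSeq_trig (a b : ℝ) {m : ℕ} (hm : 3 ≤ m)
    (hq : a * b = 4 * Real.cos (Real.pi / m) ^ 2) (j : ℕ) :
    (dSeq a b (2 * j)).1 * Real.sin (Real.pi / m) = Real.sin ((2 * j + 1) * (Real.pi / m)) ∧
    (dSeq a b (2 * j)).2 * Real.sin (2 * (Real.pi / m)) = b * Real.sin ((2 * j) * (Real.pi / m)) ∧
    (dSeq a b (2 * j + 1)).1 * Real.sin (Real.pi / m) = Real.sin ((2 * j + 1) * (Real.pi / m)) ∧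
    (dSeq a b (2 * j + 1)).2 * Real.sin (2 * (Real.pi / m)) =
      b * Real.sin ((2 * j + 2) * (Real.pi / m)) := by
  set θ := Real.pi / m with hθ
  have hmpos : (0:ℝ) < m := by positivity
  have hθpos : 0 < θ := by positivity
  have hθlt : θ < Real.pi / 2 := by
    rw [hθ, div_lt_div_iff₀ hmpos two_pos]
    have : (2:ℝ) < m := by exact_mod_cast lt_of_lt_of_le (by norm_num) hm
    nlinarith [Real.pi_pos]
  have hcos : 0 < Real.cos θ :=
    Real.cos_pos_of_mem_Ioo ⟨by linarith [Real.pi_pos], hθlt⟩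
  have hsin2 : Real.sin (2 * θ) = 2 * Real.sin θ * Real.cos θ := by
    rw [Real.sin_two_mul]
  -- the key three-term identity
  have key : ∀ A : ℝ, Real.sin (A + θ) = 2 * Real.cos θ * Real.sin A - Real.sin (A - θ) := by
    intro A
    rw [Real.sin_add, Real.sin_sub]; ring
  induction j with
  | zero =>
    have h0 : dSeq a b 0 = (1, 0) := by rw [dSeq]
    have h1 : dSeq a b 1 = (1, b) := by
      rw [dSeq_even_succ a b 0 (by simp), h0]; norm_num
    refine ⟨?_, ?_, ?_, ?_⟩
    · simp [h0]
    · simp [h0]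
    · simp [h1]
    · simp only [h1]
      have e : (2 * ((0:ℕ):ℝ) + 2) * θ = 2 * θ := by push_cast; ring
      rw [show ((2:ℝ) * (0:ℕ) + 2) * θ = 2 * θ by push_cast; ring]
  | succ j ih =>
    obtain ⟨hx0, hy0, hx1, hy1⟩ := ih
    -- step from 2j+1 to 2j+2
    have he1 : ¬ Even (2 * j + 1) := by simp [Nat.even_add_one]
    have h2 : dSeq a b (2 * (j + 1)) =
        (a * (dSeq a b (2*j+1)).2 - (dSeq a b (2*j+1)).1, (dSeq a b (2*j+1)).2) := by
      rw [show 2 * (j + 1) = (2 * j + 1) + 1 by ring, dSeq_odd_succ a b _ he1]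
    -- a * y_{2j+1} * sin θ = 2 cos θ * sin((2j+2)θ)
    have hay : a * (dSeq a b (2*j+1)).2 * Real.sin θ =
        2 * Real.cos θ * Real.sin ((2 * j + 2) * θ) := by
      have h2c : (2 : ℝ) * Real.cos θ ≠ 0 := by positivity
      apply mul_right_cancel₀ h2c
      calc a * (dSeq a b (2*j+1)).2 * Real.sin θ * (2 * Real.cos θ)
          = a * ((dSeq a b (2*j+1)).2 * Real.sin (2 * θ)) := by rw [hsin2]; ring
        _ = a * (b * Real.sin ((2 * j + 2) * θ)) := by rw [hy1]
        _ = (a * b) * Real.sin ((2 * j + 2) * θ) := by ring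
        _ = 2 * Real.cos θ * Real.sin ((2 * j + 2) * θ) * (2 * Real.cos θ) := by
            rw [hq]; ring
    have hx2 : (dSeq a b (2 * (j + 1))).1 * Real.sin θ =
        Real.sin ((2 * (j + 1) + 1) * θ) := by
      rw [h2]
      have hA := key ((2 * j + 2) * θ)
      have e1 : (2 * j + 2 : ℝ) * θ + θ = (2 * (j + 1) + 1) * θ := by push_cast; ring
      have e2 : (2 * j + 2 : ℝ) * θ - θ = (2 * j + 1) * θ := by push_cast; ring
      rw [e1, e2] at hA
      simp only
      rw [sub_mul, hay, hx1, hA]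
    have hy2 : (dSeq a b (2 * (j + 1))).2 * Real.sin (2 * θ) =
        b * Real.sin ((2 * (j + 1)) * θ) := by
      rw [h2]
      simp only
      rw [hy1]
      have e3 : (2 * (j:ℝ) + 2) * θ = (2 * ((j:ℝ) + 1)) * θ := by ring
      rw [e3]
    -- step from 2j+2 to 2j+3
    have he2 : Even (2 * (j + 1)) := by simp
    have h3 : dSeq a b (2 * (j + 1) + 1) =
        ((dSeq a b (2 * (j+1))).1, b * (dSeq a b (2 * (j+1))).1 - (dSeq a b (2 * (j+1))).2) := by
      rw [dSeq_even_succ a b _ he2]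
    have hbx : b * (dSeq a b (2 * (j+1))).1 * Real.sin (2 * θ) =
        b * (2 * Real.cos θ * Real.sin ((2 * (j + 1) + 1) * θ)) := by
      rw [hsin2]
      calc b * (dSeq a b (2 * (j+1))).1 * (2 * Real.sin θ * Real.cos θ)
          = b * (2 * Real.cos θ) * ((dSeq a b (2 * (j+1))).1 * Real.sin θ) := by ring
        _ = b * (2 * Real.cos θ * Real.sin ((2 * (j + 1) + 1) * θ)) := by rw [hx2]; ring
    have hy3 : (dSeq a b (2 * (j + 1) + 1)).2 * Real.sin (2 * θ) =
        b * Real.sin ((2 * (j + 1) + 2) * θ) := by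
      rw [h3]
      simp only
      rw [sub_mul, hbx, hy2]
      have hA := key ((2 * (j + 1) + 1) * θ)
      have e1 : (2 * (j + 1) + 1 : ℝ) * θ + θ = (2 * (j + 1) + 2) * θ := by push_cast; ring
      have e2 : (2 * (j + 1) + 1 : ℝ) * θ - θ = (2 * (j + 1)) * θ := by push_cast; ring
      rw [e1, e2] at hA
      rw [hA]; ring
    have hx3 : (dSeq a b (2 * (j + 1) + 1)).1 * Real.sin θ =
        Real.sin ((2 * (j + 1) + 1) * θ) := by
      rw [h3]; simp only; exact hx2
    refine ⟨?_, ?_, ?_, ?_⟩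
    · rw [hx2]; congr 1; push_cast; ring
    · rw [hy2]; congr 2; push_cast; ring
    · rw [hx3]; congr 1; push_cast; ring
    · rw [hy3]; congr 2; push_cast; ring
lemma dSeq_nonneg_fin (a b : ℝ) (ha : 0 ≤ a) (hb : 0 ≤ b) {m : ℕ} (hm : 2 ≤ m)
    (hq : a * b = 4 * Real.cos (Real.pi / m) ^ 2) {k : ℕ} (hk : k + 1 ≤ m) :
    0 ≤ (dSeq a b k).1 ∧ 0 ≤ (dSeq a b k).2 := by
  rcases eq_or_lt_of_le hm with hm2 | hm3
  · -- m = 2, so k ≤ 1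
    have hk1 : k ≤ 1 := by omega
    interval_cases k
    · rw [dSeq]; norm_num
    · rw [dSeq_even_succ a b 0 (by simp), dSeq]; norm_num; exact hb
  · have hm3 : 3 ≤ m := hm3
    set θ := Real.pi / m with hθ
    have hmpos : (0:ℝ) < m := by positivity
    have hθpos : 0 < θ := by positivity
    have hmθ : (m : ℝ) * θ = Real.pi := by
      rw [hθ]; field_simp
    have sin_nn : ∀ c : ℝ, 0 ≤ c → c ≤ (m:ℝ) → 0 ≤ Real.sin (c * θ) := by
      intro c h0 h1
      apply Real.sin_nonneg_of_nonneg_of_le_pi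
      · positivity
      · calc c * θ ≤ (m:ℝ) * θ := by nlinarith
          _ = Real.pi := hmθ
    have hsinθ : 0 < Real.sin θ := by
      apply Real.sin_pos_of_pos_of_lt_pi hθpos
      rw [hθ]
      calc Real.pi / m ≤ Real.pi / 3 := by
            apply div_le_div_of_nonneg_left Real.pi_pos.le (by norm_num)
            exact_mod_cast hm3
        _ < Real.pi := by nlinarith [Real.pi_pos]
    have hsin2θ : 0 < Real.sin (2 * θ) := by
      apply Real.sin_pos_of_pos_of_lt_pi (by positivity)
      have : (2:ℝ) * θ = 2 * Real.pi / m := by rw [hθ]; ring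
      rw [this]
      rw [div_lt_iff₀ hmpos]
      have : (3:ℝ) ≤ m := by exact_mod_cast hm3
      nlinarith [Real.pi_pos]
    have of_eq : ∀ x s t : ℝ, 0 < s → x * s = t → 0 ≤ t → 0 ≤ x := by
      intro x s t hs he ht
      nlinarith
    rcases Nat.even_or_odd k with ⟨j, hj⟩ | ⟨j, hj⟩
    · have hj2 : k = 2 * j := by omega
      subst hj2
      obtain ⟨hx, hy, -, -⟩ := dSeq_trig a b hm3 hq j
      rw [← hθ] at hx hy
      have hjm : (2 * (j:ℝ) + 1) ≤ (m:ℝ) := by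
        have : 2 * j + 1 ≤ m := by omega
        exact_mod_cast this
      constructor
      · exact of_eq _ _ _ hsinθ hx (sin_nn _ (by positivity) hjm)
      · have hjm0 : 2 * (j:ℝ) ≤ (m:ℝ) := by nlinarith
        exact of_eq _ _ _ hsin2θ hy (mul_nonneg hb (sin_nn _ (by positivity) hjm0))
    · subst hj
      obtain ⟨-, -, hx, hy⟩ := dSeq_trig a b hm3 hq j
      rw [← hθ] at hx hy
      have hjm1 : (2 * (j:ℝ) + 1) ≤ (m:ℝ) := by
        have : 2 * j + 1 ≤ m := by omega
        exact_mod_cast this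
      have hjm2 : (2 * (j:ℝ) + 2) ≤ (m:ℝ) := by
        have : 2 * j + 2 ≤ m := by omega
        exact_mod_cast this
      constructor
      · exact of_eq _ _ _ hsinθ hx (sin_nn _ (by positivity) hjm1)
      · exact of_eq _ _ _ hsin2θ hy (mul_nonneg hb (sin_nn _ (by positivity) hjm2))

lemma dSeq_nonneg_inf (a b : ℝ) (ha : 0 ≤ a) (hb : 0 ≤ b) (hq : 4 ≤ a * b) (k : ℕ) :
    0 ≤ (dSeq a b k).1 ∧ 0 ≤ (dSeq a b k).2 := by
  have hapos : 0 < a := by nlinarith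
  have hbpos : 0 < b := by nlinarith
  have inv : ∀ k, (Even k → 0 ≤ (dSeq a b k).2 ∧ 2 * (dSeq a b k).2 ≤ b * (dSeq a b k).1) ∧
      (¬ Even k → 0 ≤ (dSeq a b k).1 ∧ 2 * (dSeq a b k).1 ≤ a * (dSeq a b k).2) := by
    intro k
    induction k with
    | zero =>
      refine ⟨fun _ => ?_, fun h => absurd (by simp : Even 0) h⟩
      rw [dSeq]; norm_num; exact hb
    | succ k ih =>
      by_cases hk : Even k
      · obtain ⟨hy, hxy⟩ := ih.1 hk
        rw [dSeq_even_succ a b k hk]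
        simp only [Prod.fst, Prod.snd]
        have hkodd : ¬ Even (k + 1) := by simp [Nat.even_add_one, hk]
        refine ⟨fun h => absurd h hkodd, fun _ => ?_⟩
        constructor
        · nlinarith
        · nlinarith [mul_le_mul_of_nonneg_left hxy ha,
            mul_nonneg (sub_nonneg.mpr hq) (show (0:ℝ) ≤ (dSeq a b k).1 by nlinarith)]
      · obtain ⟨hx, hxy⟩ := ih.2 hk
        rw [dSeq_odd_succ a b k hk]
        simp only [Prod.fst, Prod.snd]
        have hkeven : Even (k + 1) := by simpa [Nat.even_add_one] using hk
        refine ⟨fun _ => ?_, fun h => absurd hkeven h⟩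
        constructor
        · nlinarith
        · nlinarith [mul_le_mul_of_nonneg_left hxy hb,
            mul_nonneg (sub_nonneg.mpr hq) (show (0:ℝ) ≤ (dSeq a b k).2 by nlinarith)]
  by_cases hk : Even k
  · obtain ⟨hy, hxy⟩ := (inv k).1 hk
    exact ⟨by nlinarith, hy⟩
  · obtain ⟨hx, hxy⟩ := (inv k).2 hk
    exact ⟨hx, by nlinarith⟩
section Cox

open CoxeterSystem

variable {n : ℕ} {W : Type*} [Group W]
variable (M : Matrix (Fin n) (Fin n) ℝ) (K : CoxeterMatrix (Fin n))
variable (cs : CoxeterSystem K W) (ρ : W →* Module.End ℝ (Fin n → ℝ))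

/-- Strip a maximal alternating word in `p, q` from the right of `w`. -/
lemma strip_alternating : ∀ (N : ℕ) (w : W), cs.length w ≤ N → ∀ p q : Fin n,
    cs.IsRightDescent w q →
    ∃ (u : W) (k : ℕ), 1 ≤ k ∧ w = u * cs.wordProd (alternatingWord p q k) ∧
      cs.length w = cs.length u + k ∧ ¬ cs.IsRightDescent u p ∧ ¬ cs.IsRightDescent u q := by
  intro N
  induction N with
  | zero =>
    intro w hw p q hq
    have hw1 : w = 1 := cs.length_eq_zero_iff.mp (Nat.le_zero.mp hw)
    subst hw1
    exact absurd hq (cs.not_isRightDescent_one q)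
  | succ N ih =>
    intro w hw p q hq
    have hlen : cs.length (w * cs.simple q) + 1 = cs.length w := cs.isRightDescent_iff.mp hq
    by_cases hp : cs.IsRightDescent (w * cs.simple q) p
    · obtain ⟨u, k, hk1, hdec, hl, hnq, hnp⟩ := ih (w * cs.simple q) (by omega) q p hp
      refine ⟨u, k + 1, by omega, ?_, by omega, hnp, hnq⟩
      rw [alternatingWord_succ, cs.wordProd_concat, ← mul_assoc, ← hdec,
        cs.simple_mul_simple_cancel_right]
    · refine ⟨w * cs.simple q, 1, le_refl 1, ?_, by omega, hp, ?_⟩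
      · rw [show alternatingWord p q 1 = [q] from rfl, cs.wordProd_singleton,
          cs.simple_mul_simple_cancel_right]
      · exact cs.isRightDescent_iff_not_isRightDescent_mul.mp hq

/-- The action of an alternating word on the simple root `α_i`, in terms of `dSeq`. -/
lemma rho_alt (h2 : ∀ p, M p p = 2) (hρ : ∀ p, ρ (cs.simple p) = reflLin M p)
    (i t : Fin n) (k : ℕ) :
    ρ (cs.wordProd (alternatingWord i t k)) (Pi.single i 1) =
      (dSeq (-M i t) (-M t i) k).1 • (Pi.single i 1 : Fin n → ℝ) +
      (dSeq (-M i t) (-M t i) k).2 • (Pi.single t 1 : Fin n → ℝ) := by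
  induction k with
  | zero =>
    rw [show alternatingWord i t 0 = [] from rfl, cs.wordProd_nil, map_one, dSeq]
    simp
  | succ k ih =>
    rw [alternatingWord_succ', cs.wordProd_cons, map_mul, Module.End.mul_apply, ih]
    by_cases he : Even k
    · rw [if_pos he, hρ t, reflLin_pair, h2 t, dSeq_even_succ _ _ k he]
      simp only [Prod.fst, Prod.snd]
      module
    · rw [if_neg he, hρ i, reflLin_pair, h2 i, dSeq_odd_succ _ _ k he]
      simp only [Prod.fst, Prod.snd]
      module

/-- Key positivity: if `i` is not a right descent of `w`, then `w · α_i` is a nonnegative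
combination of simple roots. -/
lemma rho_pos_of_not_descent (hMK : IsEGCM M K)
    (hρ : ∀ p, ρ (cs.simple p) = reflLin M p) :
    ∀ (N : ℕ) (w : W) (i : Fin n), cs.length w ≤ N → ¬ cs.IsRightDescent w i →
      ∀ j, 0 ≤ ρ w (Pi.single i 1) j := by
  obtain ⟨h2, hneg, hzero, hcond⟩ := hMK
  intro N
  induction N with
  | zero =>
    intro w i hw _ j
    have hw1 : w = 1 := cs.length_eq_zero_iff.mp (Nat.le_zero.mp hw)
    subst hw1
    rw [map_one, Module.End.one_apply, Pi.single_apply]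
    split <;> norm_num
  | succ N ih =>
    intro w i hw hasc j
    rcases eq_or_ne w 1 with rfl | hne
    · rw [map_one, Module.End.one_apply, Pi.single_apply]
      split <;> norm_num
    · obtain ⟨t, ht⟩ := cs.exists_rightDescent_of_ne_one hne
      have hti : t ≠ i := fun h => hasc (h ▸ ht)
      obtain ⟨u, k, hk1, hdec, hlen, hnui, hnut⟩ := strip_alternating K cs (N+1) w hw i t ht
      have hui : cs.length u ≤ N := by omega
      have IH1 := ih u i hui hnui
      have IH2 := ih u t hui hnut
      have hws : cs.length (w * cs.simple i) = cs.length w + 1 :=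
        cs.not_isRightDescent_iff.mp hasc
      have hdec2 : w * cs.simple i = u * cs.wordProd (alternatingWord t i (k+1)) := by
        rw [alternatingWord_succ, cs.wordProd_concat, ← mul_assoc, ← hdec]
      have hred : cs.length (cs.wordProd (alternatingWord t i (k+1))) = k + 1 := by
        have hle := cs.length_wordProd_le (alternatingWord t i (k+1))
        rw [length_alternatingWord] at hle
        have h1 : cs.length (w * cs.simple i) ≤
            cs.length u + cs.length (cs.wordProd (alternatingWord t i (k+1))) := by
          rw [hdec2]; exact cs.length_mul_le _ _
        omega
      have hKb : K t i = 0 ∨ k + 1 ≤ K t i := by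
        by_contra hc
        push_neg at hc
        exact (cs.not_isReduced_alternatingWord t i hc.1 hc.2)
          (by rw [CoxeterSystem.IsReduced, length_alternatingWord]; exact hred)
      have hnn : 0 ≤ (dSeq (-M i t) (-M t i) k).1 ∧ 0 ≤ (dSeq (-M i t) (-M t i) k).2 := by
        have ha : 0 ≤ -M i t := by linarith [hneg i t (Ne.symm hti)]
        have hb : 0 ≤ -M t i := by linarith [hneg t i hti]
        have hab : -M i t * -M t i = M t i * M i t := by ring
        rcases hcond t i hti with ⟨hK0, hK4⟩ | ⟨hK2, hKc⟩
        · exact dSeq_nonneg_inf _ _ ha hb (by rw [hab]; exact hK4) k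
        · have hk2 : k + 1 ≤ K t i := hKb.resolve_left (by omega)
          exact dSeq_nonneg_fin _ _ ha hb hK2 (by rw [hab]; exact hKc) hk2
      rw [hdec, map_mul, Module.End.mul_apply, rho_alt M K cs ρ h2 hρ i t k, map_add,
        map_smul, map_smul]
      simp only [Pi.add_apply, Pi.smul_apply, smul_eq_mul]
      exact add_nonneg (mul_nonneg hnn.1 (IH1 j)) (mul_nonneg hnn.2 (IH2 j))

/-- Every root is a nonnegative or nonpositive combination of simple roots. -/
lemma rho_pos_or_neg (hMK : IsEGCM M K) (hρ : ∀ p, ρ (cs.simple p) = reflLin M p)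
    (w : W) (i : Fin n) :
    (∀ j, 0 ≤ ρ w (Pi.single i 1) j) ∨ (∀ j, ρ w (Pi.single i 1) j ≤ 0) := by
  by_cases hd : cs.IsRightDescent w i
  · right
    have h1 : ¬ cs.IsRightDescent (w * cs.simple i) i :=
      cs.isRightDescent_iff_not_isRightDescent_mul.mp hd
    have h2 := rho_pos_of_not_descent M K cs ρ hMK hρ (cs.length (w * cs.simple i))
      (w * cs.simple i) i le_rfl h1
    intro j
    have key : ρ w (Pi.single i 1) = - ρ (w * cs.simple i) (Pi.single i 1) := by
      conv_lhs => rw [← cs.simple_mul_simple_cancel_right (w := w) i]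
      rw [map_mul, Module.End.mul_apply, hρ i, reflLin_single_self M i (hMK.1 i), map_neg]
    rw [key, Pi.neg_apply]
    linarith [h2 j]
  · exact Or.inl (rho_pos_of_not_descent M K cs ρ hMK hρ (cs.length w) w i le_rfl hd)

end Cox
section Roots

open CoxeterSystem

variable {n : ℕ} {W : Type*} [Group W]
variable (M : Matrix (Fin n) (Fin n) ℝ) (K : CoxeterMatrix (Fin n))
variable (cs : CoxeterSystem K W) (ρ : W →* Module.End ℝ (Fin n → ℝ))

lemma phi_stable (u : W) {v : Fin n → ℝ} (hv : v ∈ Phi ρ) : ρ u v ∈ Phi ρ := by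
  obtain ⟨w, i, rfl⟩ := hv
  exact ⟨u * w, i, by rw [map_mul, Module.End.mul_apply]⟩

lemma root_ne_zero {v : Fin n → ℝ} (hv : v ∈ Phi ρ) : v ≠ 0 := by
  obtain ⟨w, i, rfl⟩ := hv
  intro h0
  have h1 : ρ w⁻¹ (ρ w (Pi.single i 1)) = Pi.single i 1 := by
    rw [← Module.End.mul_apply, ← map_mul, inv_mul_cancel, map_one, Module.End.one_apply]
  rw [h0, map_zero] at h1
  have := congrFun h1 i
  simp at this

lemma phi_dichotomy (hMK : IsEGCM M K) (hρ : ∀ p, ρ (cs.simple p) = reflLin M p)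
    {v : Fin n → ℝ} (hv : v ∈ Phi ρ) : (∀ j, 0 ≤ v j) ∨ (∀ j, v j ≤ 0) := by
  obtain ⟨w, i, rfl⟩ := hv
  exact rho_pos_or_neg M K cs ρ hMK hρ w i

lemma reflLin_invol (hρ : ∀ p, ρ (cs.simple p) = reflLin M p) (i : Fin n) (v : Fin n → ℝ) :
    reflLin M i (reflLin M i v) = v := by
  have h : ρ (cs.simple i) * ρ (cs.simple i) = 1 := by
    rw [← map_mul, cs.simple_mul_simple_self, map_one]
  have := congrArg (fun f : Module.End ℝ (Fin n → ℝ) => f v) h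
  simp only [Module.End.mul_apply, Module.End.one_apply, hρ i] at this
  exact this

lemma mem_multA_plus {i : Fin n} {v : Fin n → ℝ} (hm : v ∈ multA i) (hp : v ∈ PhiPlus ρ) :
    ∃ c : ℝ, 0 < c ∧ v = c • (Pi.single i 1 : Fin n → ℝ) := by
  obtain ⟨c, rfl⟩ := hm
  refine ⟨c, ?_, rfl⟩
  have h1 : 0 ≤ c := by
    have := hp.2 i
    simpa using this
  rcases eq_or_lt_of_le h1 with h | h
  · exfalso
    exact root_ne_zero ρ hp.1 (by rw [← h, zero_smul])
  · exact h

lemma exists_pos_coord_ne {i : Fin n} {v : Fin n → ℝ} (hp : v ∈ PhiPlus ρ)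
    (hm : v ∉ multA i) : ∃ j, j ≠ i ∧ 0 < v j := by
  by_contra hc
  push_neg at hc
  apply hm
  refine ⟨v i, funext fun j => ?_⟩
  rcases eq_or_ne j i with rfl | hj
  · simp
  · have h1 := hc j hj
    have h2 := hp.2 j
    have : v j = 0 := le_antisymm h1 h2
    simp [this, Pi.single_eq_of_ne hj]

lemma reflLin_mem_plus (hMK : IsEGCM M K) (hρ : ∀ p, ρ (cs.simple p) = reflLin M p)
    {i : Fin n} {v : Fin n → ℝ} (hp : v ∈ PhiPlus ρ) (hm : v ∉ multA i) :
    reflLin M i v ∈ PhiPlus ρ := by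
  have hphi : reflLin M i v ∈ Phi ρ := by
    rw [← hρ i]
    exact phi_stable ρ (cs.simple i) hp.1
  obtain ⟨j₀, hj₀, hvj₀⟩ := exists_pos_coord_ne ρ hp hm
  rcases phi_dichotomy M K cs ρ hMK hρ hphi with h | h
  · exact ⟨hphi, h⟩
  · exfalso
    have := h j₀
    rw [reflLin_apply_ne M i v hj₀] at this
    linarith

end Roots
/-- Behavior of `N_M` under right multiplication by a simple reflection: if `w·α_i` is a
positive root then `N_M(ws_i) = s_i(N_M(w)) ⊔ (ℝα_i ∩ Φ_M⁺)` (a disjoint union);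
if `w·α_i` is a negative root then `N_M(ws_i) = s_i(N_M(w) \ ℝα_i)`. -/
theorem NM_mul_simple {n : ℕ} {W : Type*} [Group W]
    (M : Matrix (Fin n) (Fin n) ℝ) (K : CoxeterMatrix (Fin n)) (hMK : IsEGCM M K)
    (cs : CoxeterSystem K W)
    (ρ : W →* Module.End ℝ (Fin n → ℝ))
    (hρ : ∀ i, ρ (cs.simple i) = reflLin M i)
    (w : W) (i : Fin n) :
    (ρ w (Pi.single i 1) ∈ PhiPlus ρ →
      NM ρ (w * cs.simple i) = (reflLin M i) '' (NM ρ w) ∪ (multA i ∩ PhiPlus ρ) ∧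
      Disjoint ((reflLin M i) '' (NM ρ w)) (multA i ∩ PhiPlus ρ)) ∧
    (ρ w (Pi.single i 1) ∈ PhiMinus ρ →
      NM ρ (w * cs.simple i) = (reflLin M i) '' (NM ρ w \ multA i)) := by
  have hinv : ∀ v, reflLin M i (reflLin M i v) = v := reflLin_invol M K cs ρ hρ i
  have hsi : reflLin M i (Pi.single i 1) = -(Pi.single i 1 : Fin n → ℝ) :=
    reflLin_single_self M i (hMK.1 i)
  have hsc : ∀ c : ℝ, reflLin M i (c • (Pi.single i 1 : Fin n → ℝ)) =
      -(c • (Pi.single i 1 : Fin n → ℝ)) := by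
    intro c
    rw [map_smul, hsi, smul_neg]
  have hmul : ∀ v, ρ (w * cs.simple i) v = ρ w (reflLin M i v) := by
    intro v
    rw [map_mul, Module.End.mul_apply, hρ i]
  constructor
  · -- w · α_i positive
    intro hp
    constructor
    · -- set equality
      ext v
      constructor
      · rintro ⟨hv1, hv2⟩
        by_cases hm : v ∈ multA i
        · exact Or.inr ⟨hm, hv1⟩
        · refine Or.inl ⟨reflLin M i v, ⟨reflLin_mem_plus M K cs ρ hMK hρ hv1 hm, ?_⟩, hinv v⟩
          rw [← hmul]
          exact hv2
      · rintro (⟨u, ⟨hu1, hu2⟩, rfl⟩ | ⟨hm, hv1⟩)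
        · -- image of N_M(w)
          have hum : u ∉ multA i := by
            intro hm
            obtain ⟨c, hc, hceq⟩ := mem_multA_plus ρ hm hu1
            have hz : ρ w u = 0 := by
              funext j
              refine le_antisymm (hu2.2 j) ?_
              rw [hceq, map_smul]
              simp only [Pi.smul_apply, smul_eq_mul, Pi.zero_apply]
              exact mul_nonneg hc.le (hp.2 j)
            exact root_ne_zero ρ hu2.1 hz
          refine ⟨reflLin_mem_plus M K cs ρ hMK hρ hu1 hum, ?_⟩
          rw [hmul, hinv]
          exact hu2
        · -- multiples of α_i
          obtain ⟨c, hc, hceq⟩ := mem_multA_plus ρ hm hv1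
          refine ⟨hv1, phi_stable ρ (w * cs.simple i) hv1.1, ?_⟩
          intro j
          rw [hmul, hceq, hsc, map_neg, map_smul]
          simp only [Pi.neg_apply, Pi.smul_apply, smul_eq_mul]
          have := hp.2 j
          nlinarith
    · -- disjointness
      rw [Set.disjoint_left]
      rintro x ⟨u, hu, rfl⟩ hx
      obtain ⟨c, hc, hceq⟩ := mem_multA_plus ρ hx.1 hx.2
      have hu' : u = -(c • (Pi.single i 1 : Fin n → ℝ)) := by
        rw [← hinv u, hceq, hsc]
      have h1 : 0 ≤ u i := hu.1.2 i
      rw [hu'] at h1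
      simp only [Pi.neg_apply, Pi.smul_apply, smul_eq_mul, Pi.single_eq_same, mul_one] at h1
      linarith
  · -- w · α_i negative
    intro hneg
    ext v
    constructor
    · rintro ⟨hv1, hv2⟩
      have hm : v ∉ multA i := by
        intro hm
        obtain ⟨c, hc, hceq⟩ := mem_multA_plus ρ hm hv1
        have hz : ρ (w * cs.simple i) v = 0 := by
          funext j
          refine le_antisymm (hv2.2 j) ?_
          rw [hmul, hceq, hsc, map_neg, map_smul]
          simp only [Pi.neg_apply, Pi.smul_apply, smul_eq_mul, Pi.zero_apply]
          have := hneg.2 j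
          nlinarith
        exact root_ne_zero ρ hv2.1 hz
      refine ⟨reflLin M i v, ⟨⟨reflLin_mem_plus M K cs ρ hMK hρ hv1 hm, ?_⟩, ?_⟩, hinv v⟩
      · rw [← hmul]
        exact hv2
      · intro hmm
        obtain ⟨c, hceq⟩ := hmm
        apply hm
        refine ⟨-c, ?_⟩
        rw [← hinv v, hceq, hsc, neg_smul]
    · rintro ⟨u, ⟨⟨hu1, hu2⟩, hum⟩, rfl⟩
      refine ⟨reflLin_mem_plus M K cs ρ hMK hρ hu1 hum, ?_⟩
      rw [hmul, hinv]
      exact hu2
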